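/- Let (D, ≤, u) be a dimension group of rank at least 3 whose maximal divisible subgroup is ℚu, on which a group H acts by order-preserving group automorphisms, such that the induced map H → Aut(D/ℚu) together with −1 gives an isomorphism Aut(D/ℚu) ≅ (ℤ/2ℤ) × H (with ℤ/2ℤ generated by the automorphism −1 of D/ℚu). Then the group of order-preserving automorphisms of D is exactly the image of H: every order-preserving automorphism of D is given by the action of a unique element of H. -/

import Mathlib

/-- `q • u ≥ d` for a rational `q`, interpreted by clearing denominators: for every
representation `q = a / b` with `b > 0` we have `b • d ≤ a • u`. -/
def ratGe {D : Type*} [AddCommGroup D] [PartialOrder D] (u d : D) (q : ℚ) : Prop :=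
  ∀ a b : ℤ, 0 < b → q = (a : ℚ) / (b : ℚ) → b • d ≤ a • u

/-- `q • u ≤ d` for a rational `q`, interpreted by clearing denominators. -/
def ratLe {D : Type*} [AddCommGroup D] [PartialOrder D] (u d : D) (q : ℚ) : Prop :=
  ∀ a b : ℤ, 0 < b → q = (a : ℚ) / (b : ℚ) → a • u ≤ b • d

/-- A dimension group: a countable partially ordered abelian group (translation
invariant order) with order unit `u`, in which every finite subset is contained in a
subgroup order-isomorphic to a finite direct power of `(ℤ, ≤)`. -/
structure IsDimensionGroup (D : Type*) [AddCommGroup D] [PartialOrder D] (u : D) : Prop where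
  add_le_add : ∀ a b c : D, a ≤ b → a + c ≤ b + c
  countable : Countable D
  unit_nonneg : 0 ≤ u
  unit_arch : ∀ x : D, ∃ n : ℕ, 0 < n ∧ x ≤ (n : ℤ) • u
  locallyZ : ∀ s : Finset D, ∃ (k : ℕ) (S : AddSubgroup D) (e : S ≃+ (Fin k → ℤ)),
    (∀ x ∈ s, x ∈ S) ∧ ∀ a b : S, a ≤ b ↔ e a ≤ e b
/-- A subgroup is divisible if each of its elements is divisible, inside the
subgroup, by every nonzero integer. -/
def DivisibleSubgroup {D : Type*} [AddCommGroup D] (Q : AddSubgroup D) : Prop :=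
  ∀ x ∈ Q, ∀ n : ℤ, n ≠ 0 → ∃ y ∈ Q, n • y = x

/-- The multiplicative group structure on `AddAut A` (composition), as in the older Mathlib. -/
instance addAutGroupOld {A : Type*} [Add A] : Group (AddAut A) where
  mul g h := AddEquiv.trans h g
  one := AddEquiv.refl _
  inv := AddEquiv.symm
  mul_assoc _ _ _ := rfl
  one_mul _ := rfl
  mul_one _ := rfl
  inv_mul_cancel := AddEquiv.self_trans_symm

section Infra

variable {D : Type*} [AddCommGroup D] [PartialOrder D] {u : D}

private lemma dg_add_le (h : IsDimensionGroup D u) {x y : D} (t : D) :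
    x ≤ y ↔ x + t ≤ y + t := by
  constructor
  · exact fun hxy => h.add_le_add _ _ _ hxy
  · intro hxy
    have := h.add_le_add _ _ (-t) hxy
    simpa using this

private lemma dg_neg_le (h : IsDimensionGroup D u) {x y : D} :
    -y ≤ -x ↔ x ≤ y := by
  constructor
  · intro h'
    have := (dg_add_le h (x + y)).mp h'
    simpa [add_comm, neg_add_cancel_left] using this
  · intro h'
    have := (dg_add_le h (-x + -y)).mp h'
    simpa [add_comm, add_left_comm] using this

private lemma dg_smul_nonneg (h : IsDimensionGroup D u) {n : ℤ} (hn : 0 ≤ n) {x : D}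
    (hx : 0 ≤ x) : 0 ≤ n • x := by
  lift n to ℕ using hn
  rw [natCast_zsmul]
  induction n with
  | zero => simp
  | succ m ih =>
    rw [succ_nsmul]
    have h2 := h.add_le_add _ _ x ih
    simpa using le_trans (by simpa using (h.add_le_add 0 x (0:D) hx)) h2

private lemma dg_tf (h : IsDimensionGroup D u) {n : ℤ} (hn : n ≠ 0) {x : D}
    (hx : n • x = 0) : x = 0 := by
  classical
  obtain ⟨k, S, e, hmem, hiso⟩ := h.locallyZ {x}
  have hxS : x ∈ S := hmem x (by simp)
  have h1 : n • (⟨x, hxS⟩ : S) = 0 := by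
    apply Subtype.ext
    simpa using hx
  have h2 : n • e ⟨x, hxS⟩ = 0 := by
    rw [← map_zsmul, h1, map_zero]
  have h3 : e ⟨x, hxS⟩ = 0 := by
    rcases smul_eq_zero.mp h2 with h' | h'
    · exact absurd h' hn
    · exact h'
  have h4 : (⟨x, hxS⟩ : S) = 0 := e.injective (by simpa using h3)
  simpa using congrArg Subtype.val h4

private lemma dg_u_ne (h : IsDimensionGroup D u)
    (hrank : ∃ f : Fin 3 → D, LinearIndependent ℤ f) : u ≠ 0 := by
  intro hu
  obtain ⟨f, hf⟩ := hrank
  have hzero : ∀ x : D, x = 0 := by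
    intro x
    obtain ⟨n, _, hle⟩ := h.unit_arch x
    obtain ⟨m, _, hle'⟩ := h.unit_arch (-x)
    rw [hu, smul_zero] at hle hle'
    have : 0 ≤ x := by
      have := (dg_add_le h x).mp hle'
      simpa using this
    exact le_antisymm hle this
  exact hf.ne_zero 0 (hzero (f 0))


variable {D : Type*} [AddCommGroup D] [PartialOrder D] {u : D}

private lemma dg_coe_zsmul {S : AddSubgroup D} (n : ℤ) (s : S) :
    ((n • s : S) : D) = n • (s : D) := rfl

private lemma dg_smul_le_smul (h : IsDimensionGroup D u) {b : ℤ} (hb : 0 < b) {x y : D} :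
    b • x ≤ b • y ↔ x ≤ y := by
  classical
  obtain ⟨k, S, e, hmem, hiso⟩ := h.locallyZ {x, y}
  have hxS : x ∈ S := hmem x (by simp)
  have hyS : y ∈ S := hmem y (by simp)
  have e1 : b • x ≤ b • y ↔ (b • (⟨x, hxS⟩ : S) : S) ≤ b • (⟨y, hyS⟩ : S) := by
    rw [← Subtype.coe_le_coe, dg_coe_zsmul, dg_coe_zsmul]
  have e2 : x ≤ y ↔ (⟨x, hxS⟩ : S) ≤ (⟨y, hyS⟩ : S) := by
    rw [← Subtype.coe_le_coe]
  rw [e1, e2, hiso, hiso]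
  simp only [map_zsmul]
  constructor
  · intro hh i
    have := hh i
    simp only [Pi.smul_apply, smul_eq_mul] at this
    exact le_of_mul_le_mul_left this hb
  · intro hh i
    have := hh i
    simp only [Pi.smul_apply, smul_eq_mul]
    nlinarith [this]

private lemma dg_upos (h : IsDimensionGroup D u) {k : ℕ} {S : AddSubgroup D}
    (e : S ≃+ (Fin k → ℤ)) (hiso : ∀ a b : S, a ≤ b ↔ e a ≤ e b) (huS : u ∈ S)
    (i : Fin k) : 0 < e ⟨u, huS⟩ i := by
  obtain ⟨n, hn, harch⟩ := h.unit_arch ((e.symm (Pi.single i 1) : S) : D)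
  have hle : (e.symm (Pi.single i 1) : S) ≤ ⟨(n : ℤ) • u, S.zsmul_mem huS _⟩ :=
    Subtype.coe_le_coe.mp (by simpa using harch)
  have := (hiso _ _).mp hle
  rw [e.apply_symm_apply] at this
  have h2 : (⟨(n : ℤ) • u, S.zsmul_mem huS _⟩ : S) = (n : ℤ) • (⟨u, huS⟩ : S) := by
    apply Subtype.ext; rfl
  rw [h2, map_zsmul] at this
  have h3 := this i
  simp only [Pi.single_eq_same, Pi.smul_apply, smul_eq_mul] at h3
  by_contra hcon
  push_neg at hcon
  have : (n : ℤ) * e ⟨u, huS⟩ i ≤ 0 :=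
    mul_nonpos_iff.mpr (Or.inl ⟨by positivity, hcon⟩)
  omega

private lemma dg_char (h : IsDimensionGroup D u) (hu : u ≠ 0) (z : D) :
    ∃ q : ℚ, ∀ a b : ℤ, 0 < b → (a • u ≤ b • z ↔ (a : ℚ) / (b : ℚ) ≤ q) := by
  classical
  obtain ⟨k, S, e, hmem, hiso⟩ := h.locallyZ {z, u}
  have hzS : z ∈ S := hmem z (by simp)
  have huS : u ∈ S := hmem u (by simp)
  rcases Nat.eq_zero_or_pos k with hk | hk
  · exfalso
    subst hk
    have : (⟨u, huS⟩ : S) = (0 : S) := e.injective (Subsingleton.elim _ _)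
    exact hu (by simpa using congrArg Subtype.val this)
  haveI : Nonempty (Fin k) := ⟨⟨0, hk⟩⟩
  set U : Fin k → ℤ := e ⟨u, huS⟩ with hU
  set Z : Fin k → ℤ := e ⟨z, hzS⟩ with hZ
  have hUpos : ∀ i, 0 < U i := fun i => dg_upos h e hiso huS i
  refine ⟨Finset.univ.inf' Finset.univ_nonempty (fun i => (Z i : ℚ) / (U i : ℚ)), ?_⟩
  intro a b hb
  have key : a • u ≤ b • z ↔ ∀ i, a * U i ≤ b * Z i := by
    have e1 : a • u ≤ b • z ↔ (a • (⟨u, huS⟩ : S) : S) ≤ b • (⟨z, hzS⟩ : S) := by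
      rw [← Subtype.coe_le_coe, dg_coe_zsmul, dg_coe_zsmul]
    rw [e1, hiso, map_zsmul, map_zsmul]
    constructor
    · intro hh i; have := hh i; simpa using this
    · intro hh i; simpa using hh i
  rw [key, Finset.le_inf'_iff]
  have hbQ : (0 : ℚ) < (b : ℚ) := by exact_mod_cast hb
  constructor
  · intro hh i _
    have hUQ : (0 : ℚ) < (U i : ℚ) := by exact_mod_cast hUpos i
    rw [div_le_div_iff₀ hbQ hUQ]
    have := hh i
    have : a * U i ≤ Z i * b := by linarith [this, mul_comm b (Z i)]
    exact_mod_cast this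
  · intro hh i
    have hUQ : (0 : ℚ) < (U i : ℚ) := by exact_mod_cast hUpos i
    have h2 := hh i (Finset.mem_univ i)
    rw [div_le_div_iff₀ hbQ hUQ] at h2
    have h3 : a * U i ≤ Z i * b := by exact_mod_cast h2
    linarith [h3, mul_comm (Z i) b]




private lemma rat_cut_eq {q q' : ℚ}
    (H : ∀ a b : ℤ, 0 < b → (((a : ℚ) / (b : ℚ) ≤ q) ↔ ((a : ℚ) / (b : ℚ) ≤ q'))) :
    q = q' := by
  have h1 := H q.num q.den (by exact_mod_cast q.pos)
  have h2 := H q'.num q'.den (by exact_mod_cast q'.pos)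
  simp only [Int.cast_natCast, Rat.num_div_den] at h1 h2
  exact le_antisymm (h1.mp le_rfl) (h2.mpr le_rfl)

private lemma rat1 {a b a' b' : ℤ} {q : ℚ} (hb : 0 < b) (ha' : 0 < a') (hb' : 0 < b') :
    ((a * b' : ℤ) : ℚ) / ((a' * b : ℤ) : ℚ) ≤ q ↔ (a : ℚ) / (b : ℚ) ≤ q * (a' : ℚ) / (b' : ℚ) := by
  have hbq : (0:ℚ) < (b:ℚ) := by exact_mod_cast hb
  have ha'q : (0:ℚ) < (a':ℚ) := by exact_mod_cast ha'
  have hb'q : (0:ℚ) < (b':ℚ) := by exact_mod_cast hb'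
  rw [div_le_iff₀ (by push_cast; positivity), div_le_div_iff₀ hbq hb'q]
  push_cast
  constructor <;> intro hh <;> nlinarith

private lemma rat2 {a b a₀ b₀ : ℤ} {q : ℚ} (hb : 0 < b) (hb₀ : 0 < b₀) :
    ((b₀ * a - b * a₀ : ℤ) : ℚ) / ((b₀ * b : ℤ) : ℚ) ≤ q ↔
      (a : ℚ) / (b : ℚ) ≤ q + (a₀ : ℚ) / (b₀ : ℚ) := by
  have hbq : (0:ℚ) < (b:ℚ) := by exact_mod_cast hb
  have hb₀q : (0:ℚ) < (b₀:ℚ) := by exact_mod_cast hb₀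
  have hEq : ((b₀ * a - b * a₀ : ℤ) : ℚ) / ((b₀ * b : ℤ) : ℚ)
      = (a : ℚ) / (b : ℚ) - (a₀ : ℚ) / (b₀ : ℚ) := by
    push_cast
    field_simp
  rw [hEq, sub_le_iff_le_add]

end Infra

section Core
variable {D : Type*} [AddCommGroup D] [PartialOrder D] {u : D}

set_option maxHeartbeats 800000 in
private lemma dg_notallQ (h : IsDimensionGroup D u)
    (hrank : ∃ f : Fin 3 → D, LinearIndependent ℤ f)
    {Q : AddSubgroup D} (hQ : ∀ x : D, x ∈ Q ↔ ∃ a b : ℤ, 0 < b ∧ b • x = a • u)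
    (hall : ∀ z : D, z ∈ Q) : False := by
  obtain ⟨f, hf⟩ := hrank
  obtain ⟨a₀, b₀, hb₀, h₀⟩ := (hQ (f 0)).mp (hall (f 0))
  obtain ⟨a₁, b₁, hb₁, h₁⟩ := (hQ (f 1)).mp (hall (f 1))
  have hcomb : ∑ i : Fin 3, (![a₁ * b₀, -(a₀ * b₁), 0] : Fin 3 → ℤ) i • f i = 0 := by
    rw [Fin.sum_univ_three]
    simp only [Matrix.cons_val_zero, Matrix.cons_val_one, Matrix.head_cons, Matrix.cons_val_two,
      Matrix.tail_cons, zero_smul, add_zero]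
    have e0 : (a₁ * b₀) • f 0 = (a₁ * a₀) • u := by
      rw [mul_zsmul, h₀, ← mul_zsmul]
    have e1 : (-(a₀ * b₁)) • f 1 = -((a₀ * a₁) • u) := by
      rw [neg_zsmul, mul_zsmul, h₁, ← mul_zsmul]
    rw [e0, e1, show a₁ * a₀ = a₀ * a₁ by ring]
    abel
  have hz := Fintype.linearIndependent_iff.mp hf _ hcomb
  have h10 := hz 0
  simp only [Matrix.cons_val_zero] at h10
  have ha₁ : a₁ = 0 := by
    rcases mul_eq_zero.mp h10 with h' | h'
    · exact h'
    · omega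
  rw [ha₁, zero_zsmul] at h₁
  exact hf.ne_zero 1 (dg_tf h (by omega : b₁ ≠ 0) h₁)

set_option maxHeartbeats 1600000 in
private lemma dg_core_id (h : IsDimensionGroup D u)
    (hrank : ∃ f : Fin 3 → D, LinearIndependent ℤ f)
    {Q : AddSubgroup D} (hQ : ∀ x : D, x ∈ Q ↔ ∃ a b : ℤ, 0 < b ∧ b • x = a • u)
    (Θ : D ≃+ D) (hord : ∀ x y : D, x ≤ y ↔ Θ x ≤ Θ y)
    (hqt : ∀ x : D, Θ x - x ∈ Q) : ∀ x : D, Θ x = x := by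
  have hu : u ≠ 0 := dg_u_ne h hrank
  have huQ : u ∈ Q := (hQ u).mpr ⟨1, 1, one_pos, rfl⟩
  have hΘuQ : Θ u ∈ Q := by
    have h2 := Q.add_mem (hqt u) huQ
    simpa using h2
  obtain ⟨a', b', hb', hrepu⟩ := (hQ (Θ u)).mp hΘuQ
  have hΘu0 : 0 ≤ Θ u := by
    have := (hord 0 u).mp h.unit_nonneg
    simpa using this
  have hΘune : Θ u ≠ 0 := fun hc => hu (Θ.injective (by simpa using hc))
  have ha' : 0 < a' := by
    by_contra hc
    push_neg at hc
    have h1 : 0 ≤ b' • Θ u := dg_smul_nonneg h hb'.le hΘu0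
    rw [hrepu] at h1
    have h2 : 0 ≤ (-a') • u := dg_smul_nonneg h (by omega) h.unit_nonneg
    rw [neg_zsmul] at h2
    have h3 : a' • u ≤ 0 := by
      have := (dg_add_le h (a' • u)).mp h2
      simpa using this
    have h4 : b' • Θ u = 0 := by rw [hrepu]; exact le_antisymm h3 h1
    exact hΘune (dg_tf h (by omega : b' ≠ 0) h4)
  have hsymmu : a' • Θ.symm u = b' • u := by
    have h5 := congrArg Θ.symm hrepu
    rw [map_zsmul, map_zsmul, Θ.symm_apply_apply] at h5
    exact h5.symm
  have hordsymm : ∀ x y : D, x ≤ y ↔ Θ.symm x ≤ Θ.symm y := by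
    intro x y
    have h6 := hord (Θ.symm x) (Θ.symm y)
    rw [Θ.apply_symm_apply, Θ.apply_symm_apply] at h6
    exact h6.symm
  have key : ∀ (z : D) (q : ℚ) (a₀ b₀ : ℤ), 0 < b₀ → b₀ • (Θ z - z) = a₀ • u →
      (∀ a b : ℤ, 0 < b → (a • u ≤ b • z ↔ (a : ℚ) / (b : ℚ) ≤ q)) →
      q * (a' : ℚ) / (b' : ℚ) = q + (a₀ : ℚ) / (b₀ : ℚ) := by
    intro z q a₀ b₀ hb₀ hδ Cz
    apply rat_cut_eq
    intro a b hb
    have P1 : a • u ≤ b • Θ z ↔ (a : ℚ) / (b : ℚ) ≤ q * (a' : ℚ) / (b' : ℚ) := by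
      rw [hordsymm (a • u) (b • Θ z), map_zsmul, map_zsmul, Θ.symm_apply_apply,
        ← dg_smul_le_smul h ha']
      have lhs : a' • (a • Θ.symm u) = (a * b') • u := by
        rw [← mul_zsmul, show a' * a = a * a' by ring, mul_zsmul, hsymmu, ← mul_zsmul]
      have rhs : a' • (b • z) = (a' * b) • z := by rw [← mul_zsmul]
      rw [lhs, rhs, Cz (a * b') (a' * b) (by positivity)]
      exact rat1 hb ha' hb'
    have P2 : a • u ≤ b • Θ z ↔ (a : ℚ) / (b : ℚ) ≤ q + (a₀ : ℚ) / (b₀ : ℚ) := by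
      have hθ : b • Θ z = b • z + b • (Θ z - z) := by
        rw [← zsmul_add]
        congr 1
        abel
      rw [hθ, ← dg_smul_le_smul h hb₀]
      have lhs : b₀ • (a • u) = (b₀ * a) • u := by rw [← mul_zsmul]
      have h7 : (b₀ * b) • (Θ z - z) = (b * a₀) • u := by
        rw [show b₀ * b = b * b₀ by ring, mul_zsmul, hδ, ← mul_zsmul]
      have rhs : b₀ • (b • z + b • (Θ z - z)) = (b₀ * b) • z + (b * a₀) • u := by
        rw [zsmul_add, ← mul_zsmul, ← mul_zsmul, h7]
      rw [lhs, rhs]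
      have shift : (b₀ * a) • u ≤ (b₀ * b) • z + (b * a₀) • u ↔
          (b₀ * a - b * a₀) • u ≤ (b₀ * b) • z := by
        rw [dg_add_le h (-((b * a₀) • u))]
        constructor
        · intro hh
          have : (b₀ * a) • u + -((b * a₀) • u) = (b₀ * a - b * a₀) • u := by
            rw [sub_zsmul]; try abel
          rw [← this]
          simpa [add_assoc] using hh
        · intro hh
          have : (b₀ * a - b * a₀) • u = (b₀ * a) • u + -((b * a₀) • u) := by
            rw [sub_zsmul]; try abel
          rw [this] at hh
          simpa [add_assoc] using hh
      rw [shift, Cz (b₀ * a - b * a₀) (b₀ * b) (by positivity)]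
      exact rat2 hb hb₀
    rw [← P1, P2]
  by_cases hs : (a' : ℚ) / (b' : ℚ) = 1
  · intro z
    obtain ⟨a₀, b₀, hb₀, hδ⟩ := (hQ _).mp (hqt z)
    obtain ⟨q, Cz⟩ := dg_char h hu z
    have hk := key z q a₀ b₀ hb₀ hδ Cz
    rw [show q * (a' : ℚ) / (b' : ℚ) = q * ((a' : ℚ) / (b' : ℚ)) by ring, hs, mul_one] at hk
    have hz : (a₀ : ℚ) / (b₀ : ℚ) = 0 := by linarith
    have ha₀ : a₀ = 0 := by
      have hb₀q : ((b₀ : ℚ)) ≠ 0 := by positivity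
      field_simp at hz
      simpa using hz
    rw [ha₀, zero_zsmul] at hδ
    have := dg_tf h (by omega : b₀ ≠ 0) hδ
    have := sub_eq_zero.mp this
    exact this
  · exfalso
    apply dg_notallQ h ⟨_, hrank.choose_spec⟩ hQ
    intro z
    obtain ⟨q, Cz⟩ := dg_char h hu z
    obtain ⟨qn, Cnz⟩ := dg_char h hu (-z)
    obtain ⟨a₀, b₀, hb₀, hδ⟩ := (hQ _).mp (hqt z)
    have hδn : b₀ • (Θ (-z) - (-z)) = (-a₀) • u := by
      rw [map_neg, neg_zsmul, ← hδ]
      rw [show -(Θ z) - -z = -(Θ z - z) by abel, zsmul_neg]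
    have k1 := key z q a₀ b₀ hb₀ hδ Cz
    have k2 := key (-z) qn (-a₀) b₀ hb₀ hδn Cnz
    push_cast at k2
    have hsum : q + qn = 0 := by
      have h2 : (q + qn) * ((a' : ℚ) / (b' : ℚ) - 1) = 0 := by
        linear_combination k1 + k2
      rcases mul_eq_zero.mp h2 with h' | h'
      · exact h'
      · exact absurd (by linarith : (a' : ℚ) / (b' : ℚ) = 1) hs
    have hdenpos : (0 : ℤ) < (q.den : ℤ) := by exact_mod_cast q.pos
    have hle1 : (q.num) • u ≤ (q.den : ℤ) • z := by
      refine (Cz q.num (q.den : ℤ) hdenpos).mpr ?_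
      simp only [Int.cast_natCast, Rat.num_div_den]
      exact le_rfl
    have hle2' : (-q.num) • u ≤ (q.den : ℤ) • (-z) := by
      refine (Cnz (-q.num) (q.den : ℤ) hdenpos).mpr ?_
      have : ((-q.num : ℤ) : ℚ) / ((q.den : ℤ) : ℚ) = -q := by
        push_cast
        rw [neg_div, Rat.num_div_den]
      rw [this]
      linarith
    have hle2 : (q.den : ℤ) • z ≤ q.num • u := by
      rw [neg_zsmul, zsmul_neg] at hle2'
      exact (dg_neg_le h).mp hle2'
    exact (hQ z).mpr ⟨q.num, (q.den : ℤ), hdenpos, le_antisymm hle2 hle1⟩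

set_option maxHeartbeats 1600000 in
private lemma dg_core_neg (h : IsDimensionGroup D u)
    (hrank : ∃ f : Fin 3 → D, LinearIndependent ℤ f)
    {Q : AddSubgroup D} (hQ : ∀ x : D, x ∈ Q ↔ ∃ a b : ℤ, 0 < b ∧ b • x = a • u)
    (Θ : D ≃+ D) (hord : ∀ x y : D, x ≤ y ↔ Θ x ≤ Θ y)
    (hqt : ∀ x : D, Θ x + x ∈ Q) : False := by
  have hu : u ≠ 0 := dg_u_ne h hrank
  have huQ : u ∈ Q := (hQ u).mpr ⟨1, 1, one_pos, rfl⟩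
  have hΘuQ : Θ u ∈ Q := by
    have h2 := Q.sub_mem (hqt u) huQ
    simpa using h2
  obtain ⟨a', b', hb', hrepu⟩ := (hQ (Θ u)).mp hΘuQ
  have hΘu0 : 0 ≤ Θ u := by
    have := (hord 0 u).mp h.unit_nonneg
    simpa using this
  have hΘune : Θ u ≠ 0 := fun hc => hu (Θ.injective (by simpa using hc))
  have ha' : 0 < a' := by
    by_contra hc
    push_neg at hc
    have h1 : 0 ≤ b' • Θ u := dg_smul_nonneg h hb'.le hΘu0
    rw [hrepu] at h1
    have h2 : 0 ≤ (-a') • u := dg_smul_nonneg h (by omega) h.unit_nonneg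
    rw [neg_zsmul] at h2
    have h3 : a' • u ≤ 0 := by
      have := (dg_add_le h (a' • u)).mp h2
      simpa using this
    have h4 : b' • Θ u = 0 := by rw [hrepu]; exact le_antisymm h3 h1
    exact hΘune (dg_tf h (by omega : b' ≠ 0) h4)
  have hsymmu : a' • Θ.symm u = b' • u := by
    have h5 := congrArg Θ.symm hrepu
    rw [map_zsmul, map_zsmul, Θ.symm_apply_apply] at h5
    exact h5.symm
  have hordsymm : ∀ x y : D, x ≤ y ↔ Θ.symm x ≤ Θ.symm y := by
    intro x y
    have h6 := hord (Θ.symm x) (Θ.symm y)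
    rw [Θ.apply_symm_apply, Θ.apply_symm_apply] at h6
    exact h6.symm
  have key2 : ∀ (z : D) (q qn : ℚ) (a₀ b₀ : ℤ), 0 < b₀ → b₀ • (Θ z + z) = a₀ • u →
      (∀ a b : ℤ, 0 < b → (a • u ≤ b • z ↔ (a : ℚ) / (b : ℚ) ≤ q)) →
      (∀ a b : ℤ, 0 < b → (a • u ≤ b • (-z) ↔ (a : ℚ) / (b : ℚ) ≤ qn)) →
      q * (a' : ℚ) / (b' : ℚ) = qn + (a₀ : ℚ) / (b₀ : ℚ) := by
    intro z q qn a₀ b₀ hb₀ hδ Cz Cnz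
    apply rat_cut_eq
    intro a b hb
    have P1 : a • u ≤ b • Θ z ↔ (a : ℚ) / (b : ℚ) ≤ q * (a' : ℚ) / (b' : ℚ) := by
      rw [hordsymm (a • u) (b • Θ z), map_zsmul, map_zsmul, Θ.symm_apply_apply,
        ← dg_smul_le_smul h ha']
      have lhs : a' • (a • Θ.symm u) = (a * b') • u := by
        rw [← mul_zsmul, show a' * a = a * a' by ring, mul_zsmul, hsymmu, ← mul_zsmul]
      have rhs : a' • (b • z) = (a' * b) • z := by rw [← mul_zsmul]
      rw [lhs, rhs, Cz (a * b') (a' * b) (by positivity)]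
      exact rat1 hb ha' hb'
    have P2 : a • u ≤ b • Θ z ↔ (a : ℚ) / (b : ℚ) ≤ qn + (a₀ : ℚ) / (b₀ : ℚ) := by
      have hθ : b • Θ z = b • (-z) + b • (Θ z + z) := by
        rw [← zsmul_add]
        congr 1
        abel
      rw [hθ, ← dg_smul_le_smul h hb₀]
      have lhs : b₀ • (a • u) = (b₀ * a) • u := by rw [← mul_zsmul]
      have h7 : (b₀ * b) • (Θ z + z) = (b * a₀) • u := by
        rw [show b₀ * b = b * b₀ by ring, mul_zsmul, hδ, ← mul_zsmul]
      have rhs : b₀ • (b • (-z) + b • (Θ z + z)) = (b₀ * b) • (-z) + (b * a₀) • u := by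
        rw [zsmul_add, ← mul_zsmul, ← mul_zsmul, h7]
      rw [lhs, rhs]
      have shift : (b₀ * a) • u ≤ (b₀ * b) • (-z) + (b * a₀) • u ↔
          (b₀ * a - b * a₀) • u ≤ (b₀ * b) • (-z) := by
        rw [dg_add_le h (-((b * a₀) • u))]
        constructor
        · intro hh
          have : (b₀ * a) • u + -((b * a₀) • u) = (b₀ * a - b * a₀) • u := by
            rw [sub_zsmul]; try abel
          rw [← this]
          simpa [add_assoc] using hh
        · intro hh
          have : (b₀ * a - b * a₀) • u = (b₀ * a) • u + -((b * a₀) • u) := by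
            rw [sub_zsmul]; try abel
          rw [this] at hh
          simpa [add_assoc] using hh
      rw [shift, Cnz (b₀ * a - b * a₀) (b₀ * b) (by positivity)]
      exact rat2 hb hb₀
    rw [← P1, P2]
  by_cases hs : (a' : ℚ) / (b' : ℚ) = 1
  swap
  · apply dg_notallQ h ⟨_, hrank.choose_spec⟩ hQ
    intro z
    obtain ⟨q, Cz⟩ := dg_char h hu z
    obtain ⟨qn, Cnz⟩ := dg_char h hu (-z)
    have Cz' : ∀ a b : ℤ, 0 < b → (a • u ≤ b • (- - z) ↔ (a : ℚ) / (b : ℚ) ≤ q) := by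
      simpa using Cz
    obtain ⟨a₀, b₀, hb₀, hδ⟩ := (hQ _).mp (hqt z)
    have hδn : b₀ • (Θ (-z) + (-z)) = (-a₀) • u := by
      rw [map_neg, neg_zsmul, ← hδ]
      rw [show -(Θ z) + -z = -(Θ z + z) by abel, zsmul_neg]
    have k1 := key2 z q qn a₀ b₀ hb₀ hδ Cz Cnz
    have k2 := key2 (-z) qn q (-a₀) b₀ hb₀ hδn Cnz Cz'
    push_cast at k2
    have hsum : q + qn = 0 := by
      have h2 : (q + qn) * ((a' : ℚ) / (b' : ℚ) - 1) = 0 := by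
        linear_combination k1 + k2
      rcases mul_eq_zero.mp h2 with h' | h'
      · exact h'
      · exact absurd (by linarith : (a' : ℚ) / (b' : ℚ) = 1) hs
    have hdenpos : (0 : ℤ) < (q.den : ℤ) := by exact_mod_cast q.pos
    have hle1 : (q.num) • u ≤ (q.den : ℤ) • z := by
      refine (Cz q.num (q.den : ℤ) hdenpos).mpr ?_
      simp only [Int.cast_natCast, Rat.num_div_den]
      exact le_rfl
    have hle2' : (-q.num) • u ≤ (q.den : ℤ) • (-z) := by
      refine (Cnz (-q.num) (q.den : ℤ) hdenpos).mpr ?_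
      have : ((-q.num : ℤ) : ℚ) / ((q.den : ℤ) : ℚ) = -q := by
        push_cast
        rw [neg_div, Rat.num_div_den]
      rw [this]
      linarith
    have hle2 : (q.den : ℤ) • z ≤ q.num • u := by
      rw [neg_zsmul, zsmul_neg] at hle2'
      exact (dg_neg_le h).mp hle2'
    exact (hQ z).mpr ⟨q.num, (q.den : ℤ), hdenpos, le_antisymm hle2 hle1⟩
  · -- s' = 1 : the coordinate argument
    have hab' : a' = b' := by
      have hb'q : ((b' : ℚ)) ≠ 0 := by positivity
      field_simp at hs
      exact_mod_cast hs
    have hΘu_eq : Θ u = u := by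
      have h8 : b' • (Θ u - u) = 0 := by
        rw [zsmul_sub, hrepu, hab']
        exact sub_self _
      exact sub_eq_zero.mp (dg_tf h (by omega : b' ≠ 0) h8)
    -- value function
    have hex : ∀ z : D, ∃ a b : ℤ, 0 < b ∧ b • (Θ z + z) = a • u := by
      intro z
      obtain ⟨a₀, b₀, hb₀, hδ⟩ := (hQ _).mp (hqt z)
      exact ⟨a₀, b₀, hb₀, hδ⟩
    choose A B hB hAB using hex
    have uval : ∀ (z : D) (a b : ℤ), 0 < b → b • (Θ z + z) = a • u →
        (a : ℚ) / (b : ℚ) = (A z : ℚ) / (B z : ℚ) := by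
      intro z a b hb hab
      have h1 : (b * A z) • u = (a * B z) • u := by
        calc (b * A z) • u = b • (A z • u) := by rw [mul_zsmul]
          _ = b • (B z • (Θ z + z)) := by rw [hAB z]
          _ = B z • (b • (Θ z + z)) := by
              rw [← mul_zsmul, show b * B z = B z * b by ring, mul_zsmul]
          _ = B z • (a • u) := by rw [hab]
          _ = (a * B z) • u := by rw [← mul_zsmul, show B z * a = a * B z by ring]
      have h3 : (b * A z - a * B z) • u = 0 := by
        rw [sub_zsmul, h1]
        simp
      have h2 : b * A z = a * B z := by
        by_contra hne
        exact hu (dg_tf h (by omega : b * A z - a * B z ≠ 0) h3)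
      rw [div_eq_div_iff (by exact_mod_cast hb.ne' : ((b : ℚ)) ≠ 0)
        (by exact_mod_cast (hB z).ne' : ((B z : ℚ)) ≠ 0)]
      exact_mod_cast (by linarith : a * B z = A z * b)
    have hadd : ∀ y w : D, (A (y + w) : ℚ) / (B (y + w) : ℚ)
        = (A y : ℚ) / (B y : ℚ) + (A w : ℚ) / (B w : ℚ) := by
      intro y w
      have e9 : Θ (y + w) + (y + w) = (Θ y + y) + (Θ w + w) := by rw [map_add]; abel
      have h1 : (B y * B w) • (Θ (y + w) + (y + w)) = (A y * B w + A w * B y) • u := by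
        rw [e9, zsmul_add, add_zsmul]
        congr 1
        · rw [show B y * B w = B w * B y by ring, mul_zsmul, hAB y, ← mul_zsmul,
            show B w * A y = A y * B w by ring]
        · rw [mul_zsmul, hAB w, ← mul_zsmul, show B y * A w = A w * B y by ring]
      have h2 := uval (y + w) _ _ (mul_pos (hB y) (hB w)) h1
      rw [← h2]
      have hBy : ((B y : ℚ)) ≠ 0 := by exact_mod_cast (hB y).ne'
      have hBw : ((B w : ℚ)) ≠ 0 := by exact_mod_cast (hB w).ne'
      push_cast
      rw [div_add_div _ _ hBy hBw,
        div_eq_div_iff (mul_ne_zero hBy hBw) (mul_ne_zero hBy hBw)]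
      ring
    have keyval : ∀ (z : D) (q qn : ℚ),
        (∀ a b : ℤ, 0 < b → (a • u ≤ b • z ↔ (a : ℚ) / (b : ℚ) ≤ q)) →
        (∀ a b : ℤ, 0 < b → (a • u ≤ b • (-z) ↔ (a : ℚ) / (b : ℚ) ≤ qn)) →
        (A z : ℚ) / (B z : ℚ) = q - qn := by
      intro z q qn Cz Cnz
      have k := key2 z q qn (A z) (B z) (hB z) (hAB z) Cz Cnz
      rw [show q * (a' : ℚ) / (b' : ℚ) = q * ((a' : ℚ) / (b' : ℚ)) by ring, hs, mul_one] at k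
      linarith
    -- the big subgroup
    classical
    obtain ⟨f, hf⟩ := hrank
    obtain ⟨k, S, e, hmem, hiso⟩ := h.locallyZ {f 0, f 1, f 2, u}
    have huS : u ∈ S := hmem u (by simp)
    have hfS : ∀ i : Fin 3, f i ∈ S := by
      intro i
      fin_cases i <;> exact hmem _ (by simp)
    have hk3 : 3 ≤ k := by
      have hg : LinearIndependent ℤ (fun i : Fin 3 => (⟨f i, hfS i⟩ : S)) := by
        apply LinearIndependent.of_comp (S.subtype.toIntLinearMap)
        convert hf
        funext i; rfl
      have hF : LinearIndependent ℤ (fun i : Fin 3 => e (⟨f i, hfS i⟩ : S)) := by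
        have := hg.map' (e.toIntLinearEquiv.toLinearMap)
          (LinearMap.ker_eq_bot.mpr e.toIntLinearEquiv.injective)
        convert this
        all_goals rfl
      have := hF.fintype_card_le_finrank
      simpa [Module.finrank_fin_fun] using this
    set U : Fin k → ℤ := e ⟨u, huS⟩ with hU
    have hUpos : ∀ i, 0 < U i := fun i => dg_upos h e hiso huS i
    set ε : Fin k → D := fun j => ((e.symm (Pi.single j 1) : S) : D) with hε
    -- characterizations for ε j
    have hcoord : ∀ (j : Fin k) (a b : ℤ) (w : Fin k → ℤ),
        (a • u ≤ b • ((e.symm w : S) : D) ↔ ∀ i, a * U i ≤ b * w i) := by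
      intro j a b w
      have e1 : a • u ≤ b • ((e.symm w : S) : D) ↔
          (a • (⟨u, huS⟩ : S) : S) ≤ b • (e.symm w) := by
        rw [← Subtype.coe_le_coe, dg_coe_zsmul, dg_coe_zsmul]
      rw [e1, hiso]
      simp only [map_zsmul, e.apply_symm_apply]
      constructor
      · intro hh i; have := hh i; simpa using this
      · intro hh i; simpa using hh i
    have hne : ∀ j : Fin k, ∃ i : Fin k, i ≠ j := by
      intro j
      by_cases h0 : j = ⟨0, by omega⟩
      · refine ⟨⟨1, by omega⟩, ?_⟩
        subst h0
        intro hc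
        have := congrArg Fin.val hc
        simp at this
      · exact ⟨⟨0, by omega⟩, fun hc => h0 hc.symm⟩
    have Cε0 : ∀ (j : Fin k) (a b : ℤ), 0 < b →
        (a • u ≤ b • ε j ↔ (a : ℚ) / (b : ℚ) ≤ 0) := by
      intro j a b hb
      rw [hcoord j a b (Pi.single j 1)]
      obtain ⟨i, hi⟩ := hne j
      constructor
      · intro hh
        have h1 := hh i
        rw [Pi.single_eq_of_ne hi] at h1
        have ha : a ≤ 0 := by nlinarith [hUpos i]
        apply div_nonpos_of_nonpos_of_nonneg
        · exact_mod_cast ha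
        · exact_mod_cast hb.le
      · intro hh i'
        have ha : a ≤ 0 := by
          by_contra hpos
          push_neg at hpos
          have haq : (0:ℚ) < (a:ℚ) := by exact_mod_cast hpos
          have hbq : (0:ℚ) < (b:ℚ) := by exact_mod_cast hb
          have := div_pos haq hbq
          linarith
        have h1 : a * U i' ≤ 0 := mul_nonpos_iff.mpr (Or.inr ⟨ha, (hUpos i').le⟩)
        have h2 : 0 ≤ b * (Pi.single j (1:ℤ) : Fin k → ℤ) i' := by
          rcases eq_or_ne i' j with rfl | hij
          · simp only [Pi.single_eq_same]
            omega
          · rw [Pi.single_eq_of_ne hij]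
            simp
        omega
    have Cεneg : ∀ (j : Fin k) (a b : ℤ), 0 < b →
        (a • u ≤ b • (-ε j) ↔ (a : ℚ) / (b : ℚ) ≤ (-1 : ℚ) / (U j : ℚ)) := by
      intro j a b hb
      have hw : -ε j = ((e.symm (-(Pi.single j 1)) : S) : D) := by
        rw [map_neg]
        rfl
      rw [hw, hcoord j a b (-(Pi.single j 1))]
      have hUjq : (0:ℚ) < (U j : ℚ) := by exact_mod_cast hUpos j
      have hbq : (0:ℚ) < (b : ℚ) := by exact_mod_cast hb
      constructor
      · intro hh
        have h1 := hh j
        simp only [Pi.neg_apply, Pi.single_eq_same] at h1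
        rw [div_le_div_iff₀ hbq hUjq]
        have h2 : a * U j ≤ -b := by omega
        have h3 : (a:ℚ) * (U j : ℚ) ≤ -(b:ℚ) := by exact_mod_cast h2
        linarith
      · intro hh i'
        rw [div_le_div_iff₀ hbq hUjq] at hh
        have haUj : a * U j ≤ -b := by
          have h4 : (a:ℚ) * (U j : ℚ) ≤ -(b:ℚ) := by linarith
          exact_mod_cast h4
        have ha : a < 0 := by nlinarith [hUpos j, hb]
        rcases eq_or_ne i' j with rfl | hij
        · simp only [Pi.neg_apply, Pi.single_eq_same]
          omega
        · rw [Pi.neg_apply, Pi.single_eq_of_ne hij]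
          have : a * U i' ≤ 0 := mul_nonpos_iff.mpr (Or.inr ⟨ha.le, (hUpos i').le⟩)
          omega
    have hεval : ∀ j : Fin k, (A (ε j) : ℚ) / (B (ε j) : ℚ) = 1 / (U j : ℚ) := by
      intro j
      have h5 := keyval (ε j) 0 ((-1 : ℚ) / (U j : ℚ)) (Cε0 j) (Cεneg j)
      rw [h5]
      rw [zero_sub, ← neg_div, neg_neg]
    -- u as a sum
    have hsumS : (⟨u, huS⟩ : S) = ∑ j, (U j) • e.symm (Pi.single j 1) := by
      apply e.injective
      rw [map_sum]
      simp only [map_zsmul, e.apply_symm_apply]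
      have h6 : ∀ j, (U j) • (Pi.single j (1:ℤ) : Fin k → ℤ)
          = (Pi.single j (U j) : Fin k → ℤ) := by
        intro j
        ext i
        rcases eq_or_ne i j with rfl | hij
        · simp
        · simp [Pi.single_eq_of_ne hij]
      simp_rw [h6]
      exact (Finset.univ_sum_single (e ⟨u, huS⟩)).symm
    have hu_sum : u = ∑ j, (U j) • ε j := by
      have := congrArg (S.subtype) hsumS
      rw [map_sum] at this
      simpa [hε] using this
    -- additive value map
    let Cmap : D →+ ℚ := AddMonoidHom.mk' (fun z => (A z : ℚ) / (B z : ℚ)) hadd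
    have hCu : Cmap u = 2 := by
      have h1 : (A u : ℚ) / (B u : ℚ) = 2 := by
        have h2 := uval u 2 1 one_pos (by rw [one_zsmul, hΘu_eq, two_zsmul])
        rw [← h2]
        norm_num
      exact h1
    have hCsum : Cmap u = (k : ℚ) := by
      rw [hu_sum, map_sum]
      have : ∀ j : Fin k, Cmap ((U j) • ε j) = 1 := by
        intro j
        rw [map_zsmul, zsmul_eq_mul]
        show (U j : ℚ) * ((A (ε j) : ℚ) / (B (ε j) : ℚ)) = 1
        rw [hεval j]
        have : ((U j : ℚ)) ≠ 0 := by exact_mod_cast (hUpos j).ne'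
        field_simp
      rw [Finset.sum_congr rfl (fun j _ => this j)]
      simp
    rw [hCu] at hCsum
    have : (2:ℚ) = (k:ℚ) := hCsum
    have hk2 : (k:ℤ) = 2 := by exact_mod_cast this.symm
    omega

private lemma dg_autQ {Q : AddSubgroup D}
    (hdiv : DivisibleSubgroup Q)
    (hmax : ∀ Q' : AddSubgroup D, DivisibleSubgroup Q' → Q' ≤ Q)
    (Ψ : D ≃+ D) {x : D} (hx : x ∈ Q) : Ψ x ∈ Q := by
  have hdiv' : DivisibleSubgroup (Q.map Ψ.toAddMonoidHom) := by
    intro y hy n hn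
    obtain ⟨x', hx', rfl⟩ := hy
    obtain ⟨w, hw, hww⟩ := hdiv x' hx' n hn
    refine ⟨Ψ w, ⟨w, hw, rfl⟩, ?_⟩
    simp only [AddEquiv.coe_toAddMonoidHom]
    rw [← map_zsmul, hww]
  have := hmax _ hdiv'
  exact this ⟨x, hx, rfl⟩

end Core

set_option maxHeartbeats 1600000

/-- Let `(D, ≤, u)` be a dimension group of rank at least 3 whose
maximal divisible subgroup is `ℚu`, with a group `H` acting by order-preserving
automorphisms such that the induced automorphisms of `D ⧸ ℚu` together with `-1`
exhaust `Aut (D ⧸ ℚu)` uniquely (i.e. `Aut (D ⧸ ℚu) ≅ ℤ/2 × H`).  Then every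
order-preserving automorphism of `D` is the action of a unique element of `H`. -/
theorem stmt19 {D : Type*} [AddCommGroup D] [PartialOrder D] (u : D)
    (h : IsDimensionGroup D u)
    (hrank : ∃ f : Fin 3 → D, LinearIndependent ℤ f)
    (Q : AddSubgroup D)
    (hQ : ∀ x : D, x ∈ Q ↔ ∃ a b : ℤ, 0 < b ∧ b • x = a • u)
    (hdiv : DivisibleSubgroup Q)
    (hmax : ∀ Q' : AddSubgroup D, DivisibleSubgroup Q' → Q' ≤ Q)
    {H : Type*} [Group H] (ρ : H →* AddAut D)
    (hρord : ∀ (g : H) (x y : D), x ≤ y ↔ ρ g x ≤ ρ g y)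
    (bar : H →* AddAut (D ⧸ Q))
    (hbar : ∀ (g : H) (x : D),
      bar g (QuotientAddGroup.mk x) = QuotientAddGroup.mk (ρ g x))
    (hfull : ∀ ψ : AddAut (D ⧸ Q), ∃! p : Bool × H,
      ∀ x : D ⧸ Q, ψ x = (if p.1 then -(bar p.2 x) else bar p.2 x)) :
    ∀ Φ : AddAut D, (∀ x y : D, x ≤ y ↔ Φ x ≤ Φ y) →
      ∃! g : H, Φ = ρ g := by
  intro Φ hΦord
  -- Φ preserves Q
  have hQΦ : ∀ x ∈ Q, (Φ : D ≃+ D) x ∈ Q := fun x hx => dg_autQ hdiv hmax Φ hx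
  have hQΦs : ∀ x ∈ Q, (Φ : D ≃+ D).symm x ∈ Q :=
    fun x hx => dg_autQ hdiv hmax (Φ : D ≃+ D).symm hx
  -- induced automorphism of the quotient
  have hle1 : Q ≤ Q.comap (Φ : D ≃+ D).toAddMonoidHom := fun x hx => hQΦ x hx
  have hle2 : Q ≤ Q.comap ((Φ : D ≃+ D).symm).toAddMonoidHom := fun x hx => hQΦs x hx
  let F : D ⧸ Q →+ D ⧸ Q := QuotientAddGroup.map Q Q (Φ : D ≃+ D).toAddMonoidHom hle1
  let G : D ⧸ Q →+ D ⧸ Q := QuotientAddGroup.map Q Q ((Φ : D ≃+ D).symm).toAddMonoidHom hle2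
  have hFmk : ∀ x : D, F (QuotientAddGroup.mk x) = QuotientAddGroup.mk (Φ x) := by
    intro x; rfl
  have hGmk : ∀ x : D, G (QuotientAddGroup.mk x) = QuotientAddGroup.mk ((Φ : D ≃+ D).symm x) := by
    intro x; rfl
  let ψ : AddAut (D ⧸ Q) :=
    { toFun := F
      invFun := G
      left_inv := by
        intro x
        refine QuotientAddGroup.induction_on x ?_
        intro z
        rw [hFmk, hGmk]
        simp
      right_inv := by
        intro x
        refine QuotientAddGroup.induction_on x ?_
        intro z
        rw [hGmk, hFmk]
        simp
      map_add' := F.map_add }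
  have hψmk : ∀ x : D, ψ (QuotientAddGroup.mk x) = QuotientAddGroup.mk (Φ x) := hFmk
  obtain ⟨⟨ε, g⟩, hp, huniq⟩ := hfull ψ
  -- order-preserving facts
  have hρsym : ∀ (x y : D), (ρ g).symm x ≤ (ρ g).symm y ↔ x ≤ y := by
    intro x y
    have h6 := hρord g ((ρ g).symm x) ((ρ g).symm y)
    rw [AddEquiv.apply_symm_apply, AddEquiv.apply_symm_apply] at h6
    exact h6
  let Θ : D ≃+ D := (Φ : D ≃+ D).trans (ρ g : D ≃+ D).symm
  have hΘfun : ∀ x : D, Θ x = (ρ g).symm (Φ x) := fun x => rfl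
  have hΘord : ∀ x y : D, x ≤ y ↔ Θ x ≤ Θ y := by
    intro x y
    rw [hΘfun, hΘfun]
    rw [hρsym]
    exact hΦord x y
  -- uniqueness (independent of the case)
  have hGuniq : ∀ g₁ g₂ : H, Φ = ρ g₁ → Φ = ρ g₂ → g₁ = g₂ := by
    intro g₁ g₂ h₁ h₂
    have hb1 : ∀ x : D ⧸ Q, ψ x = (if (false, g₁).1 then -(bar (false, g₁).2 x)
        else bar (false, g₁).2 x) := by
      intro x
      refine QuotientAddGroup.induction_on x ?_
      intro z
      simp only [Bool.false_eq_true, if_false]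
      rw [hψmk, hbar, ← h₁]
    have hb2 : ∀ x : D ⧸ Q, ψ x = (if (false, g₂).1 then -(bar (false, g₂).2 x)
        else bar (false, g₂).2 x) := by
      intro x
      refine QuotientAddGroup.induction_on x ?_
      intro z
      simp only [Bool.false_eq_true, if_false]
      rw [hψmk, hbar, ← h₂]
    have e1 := huniq _ hb1
    have e2 := huniq _ hb2
    have := e1.trans e2.symm
    simpa using this
  cases ε with
  | false =>
    -- Θ induces the identity on the quotient
    have hqt : ∀ x : D, Θ x - x ∈ Q := by
      intro x
      have h7 := hp (QuotientAddGroup.mk x)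
      simp only [Bool.false_eq_true, if_false] at h7
      rw [hψmk, hbar] at h7
      have h8 : Φ x - ρ g x ∈ Q := by
        have := (QuotientAddGroup.eq (s := Q)).mp h7
        simpa [neg_add_eq_sub] using Q.neg_mem this
      have h9 : Θ x - x = (ρ g).symm (Φ x - ρ g x) := by
        rw [hΘfun, map_sub, AddEquiv.symm_apply_apply]
      rw [h9]
      exact dg_autQ hdiv hmax (ρ g : D ≃+ D).symm h8
    have hid := dg_core_id h hrank hQ Θ hΘord hqt
    have hΦg : Φ = ρ g := by
      apply AddEquiv.ext
      intro x
      have := hid x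
      rw [hΘfun] at this
      have := congrArg (ρ g) this
      rw [AddEquiv.apply_symm_apply] at this
      exact this
    exact ⟨g, hΦg, fun g' hg' => hGuniq g' g hg' hΦg⟩
  | true =>
    exfalso
    have hqt : ∀ x : D, Θ x + x ∈ Q := by
      intro x
      have h7 := hp (QuotientAddGroup.mk x)
      simp only [if_true] at h7
      rw [hψmk, hbar] at h7
      have h8 : Φ x + ρ g x ∈ Q := by
        have h9 : (QuotientAddGroup.mk (Φ x + ρ g x) : D ⧸ Q) = 0 := by
          rw [QuotientAddGroup.mk_add, h7]
          simp
        exact (QuotientAddGroup.eq_zero_iff _).mp h9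
      have h9 : Θ x + x = (ρ g).symm (Φ x + ρ g x) := by
        rw [hΘfun, map_add, AddEquiv.symm_apply_apply]
      rw [h9]
      exact dg_autQ hdiv hmax (ρ g : D ≃+ D).symm h8
    exact dg_core_neg h hrank hQ Θ hΘord hqt
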